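/- Let M be an optimal GK-model in which all instances of φ → □◇φ and ◇□φ → φ are valid. Then S is symmetric: S(x,y) = S(y,x) for all x,y. (Indeed S_□(x,y) ≤ S_◇(y,x) and S_◇(y,x) ≤ S_□(x,y), so S_◇(x,y) = S_□(y,x).) -/
import Mathlib


open scoped Classical

noncomputable def gimp (a b : ℝ) : ℝ := if a ≤ b then 1 else b

inductive GForm : Type where
  | bot : GForm
  | var : ℕ → GForm
  | and : GForm → GForm → GForm
  | or : GForm → GForm → GForm
  | imp : GForm → GForm → GForm
  | box : GForm → GForm
  | dia : GForm → GForm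

def GForm.neg (φ : GForm) : GForm := φ.imp .bot

noncomputable def ev {W : Type} (S : W → W → ℝ) (e : ℕ → W → ℝ) : GForm → W → ℝ
  | .bot, _ => 0
  | .var p, x => e p x
  | .and φ ψ, x => min (ev S e φ x) (ev S e ψ x)
  | .or φ ψ, x => max (ev S e φ x) (ev S e ψ x)
  | .imp φ ψ, x => gimp (ev S e φ x) (ev S e ψ x)
  | .box φ, x => ⨅ y, gimp (S x y) (ev S e φ y)
  | .dia φ, x => ⨆ y, min (S x y) (ev S e φ y)

noncomputable def Splus {W : Type} (S : W → W → ℝ) (e : ℕ → W → ℝ) (x y : W) : ℝ :=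
  min (⨅ φ : GForm, gimp (ev S e (.box φ) x) (ev S e φ y))
      (⨅ φ : GForm, gimp (ev S e φ y) (ev S e (.dia φ) x))

instance : Nonempty GForm := ⟨.bot⟩

lemma gimp_mono {a₁ a₂ b₁ b₂ : ℝ} (hb1 : b₁ ≤ 1) (ha : a₂ ≤ a₁) (hb : b₁ ≤ b₂) :
    gimp a₁ b₁ ≤ gimp a₂ b₂ := by
  unfold gimp
  split_ifs with h1 h2 h2
  · exact le_rfl
  · exact absurd ((ha.trans h1).trans hb) h2
  · exact hb1
  · exact hb

lemma gimp_mem {a b : ℝ} (hb : b ∈ Set.Icc (0:ℝ) 1) : gimp a b ∈ Set.Icc (0:ℝ) 1 := by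
  unfold gimp; split_ifs <;> simp [hb.1, hb.2]

lemma gimp_one_le {a b : ℝ} (ha : a ≤ 1) (h : gimp a b = 1) : a ≤ b := by
  unfold gimp at h
  split_ifs at h with h1
  · exact h1
  · exact h ▸ ha

lemma ev_mem {W : Type} [Nonempty W] (S : W → W → ℝ) (e : ℕ → W → ℝ)
    (hS : ∀ x y, S x y ∈ Set.Icc (0:ℝ) 1) (he : ∀ p x, e p x ∈ Set.Icc (0:ℝ) 1) :
    ∀ (φ : GForm) (x : W), ev S e φ x ∈ Set.Icc (0:ℝ) 1 := by
  intro φ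
  induction φ with
  | bot => intro x; simp [ev]
  | var p => intro x; exact he p x
  | and φ ψ ihφ ihψ =>
      intro x
      exact ⟨le_min (ihφ x).1 (ihψ x).1, min_le_of_left_le (ihφ x).2⟩
  | or φ ψ ihφ ihψ =>
      intro x
      exact ⟨le_max_of_le_left (ihφ x).1, max_le (ihφ x).2 (ihψ x).2⟩
  | imp φ ψ ihφ ihψ => intro x; exact gimp_mem (ihψ x)
  | box φ ih =>
      intro x
      refine ⟨le_ciInf fun y => (gimp_mem (ih y)).1, ?_⟩
      exact (ciInf_le ⟨0, fun v hv => by obtain ⟨y, rfl⟩ := hv; exact (gimp_mem (ih y)).1⟩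
          (Classical.arbitrary W)).trans (gimp_mem (ih _)).2
  | dia φ ih =>
      intro x
      refine ⟨?_, ciSup_le fun y => min_le_of_right_le (ih y).2⟩
      exact le_ciSup_of_le
        ⟨1, fun v hv => by obtain ⟨y, rfl⟩ := hv; exact min_le_of_right_le (ih y).2⟩
        (Classical.arbitrary W)
        (le_min (hS x _).1 (ih _).1)

theorem stmt13 (W : Type) [Nonempty W] (S : W → W → ℝ) (e : ℕ → W → ℝ)
    (hS : ∀ x y, S x y ∈ Set.Icc (0:ℝ) 1) (he : ∀ p x, e p x ∈ Set.Icc (0:ℝ) 1)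
    (hopt : ∀ x y, S x y = Splus S e x y)
    (hM : ∀ (φ : GForm) (x : W), ev S e (.imp φ (.box (.dia φ))) x = 1 ∧
      ev S e (.imp (.dia (.box φ)) φ) x = 1) :
    ∀ x y, S x y = S y x := by
  have hev := ev_mem S e hS he
  have key : ∀ x y : W, S x y ≤ S y x := by
    intro x y
    have hbddA : ∀ z w : W, BddBelow (Set.range fun φ : GForm =>
        gimp (ev S e (.box φ) z) (ev S e φ w)) :=
      fun z w => ⟨0, fun v hv => by obtain ⟨φ, rfl⟩ := hv; exact (gimp_mem (hev φ w)).1⟩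
    have hbddB : ∀ z w : W, BddBelow (Set.range fun φ : GForm =>
        gimp (ev S e φ w) (ev S e (.dia φ) z)) :=
      fun z w => ⟨0, fun v hv => by obtain ⟨φ, rfl⟩ := hv; exact (gimp_mem (hev (.dia φ) z)).1⟩
    rw [hopt x y, hopt y x]
    unfold Splus
    refine le_min (le_ciInf fun φ => ?_) (le_ciInf fun φ => ?_)
    · -- min ≤ gimp (ev □φ y) (ev φ x), via second component at □φ
      refine (min_le_right _ _).trans ?_
      refine (ciInf_le (hbddB x y) (.box φ)).trans ?_
      exact gimp_mono (hev (.dia (.box φ)) x).2 le_rfl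
        (gimp_one_le (hev (.dia (.box φ)) x).2 (hM φ x).2)
    · -- min ≤ gimp (ev φ x) (ev ◇φ y), via first component at ◇φ
      refine (min_le_left _ _).trans ?_
      refine (ciInf_le (hbddA x y) (.dia φ)).trans ?_
      exact gimp_mono (hev (.dia φ) y).2
        (gimp_one_le (hev φ x).2 (hM φ x).1) le_rfl
  exact fun x y => le_antisymm (key x y) (key y x)
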